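/- There is an absolute constant C > 0 with the following property. Let k ≥ 1 and t be integers with 0 ≤ t ≤ k, and let a be an integer with 0 ≤ a ≤ 2^t − 1. Then ∑_{0 ≤ r < 2^k, r ≡ a (mod 2^t)} |ε̂_k(r)| ≤ C · 2^{(1/2 − c)(k−t)} · |ε̂_t(a)| · k, where c = 1/2 − θ₀/2 and θ₀ = log₂ √(2 + √2). -/

import Mathlib

/-- `eps n = 1` if the binary digit sum of `n` is even, and `-1` otherwise. -/
noncomputable def eps (n : ℕ) : ℂ :=
  if Even ((Nat.digits 2 n).sum) then 1 else -1

/-- The discrete Fourier coefficient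
`ε̂_m(r) = 2^{-m} ∑_{x=0}^{2^m-1} ε(x) e^{-2πirx/2^m}`. -/
noncomputable def epsHat (m : ℕ) (r : ℕ) : ℂ :=
  (2 : ℂ) ^ (-(m : ℤ)) *
    ∑ x ∈ Finset.range (2 ^ m),
      eps x * Complex.exp (-(2 * Real.pi * Complex.I * r * x) / 2 ^ m)


lemma eps_two_mul (y : ℕ) : eps (2*y) = eps y := by
  rcases Nat.eq_zero_or_pos y with h | h
  · simp [h]
  · unfold eps
    rw [Nat.digits_def' (by norm_num) (by omega)]
    simp [Nat.mul_div_cancel_left _ (by norm_num : 0 < 2), Nat.mul_mod_right]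

lemma eps_two_mul_add_one (y : ℕ) : eps (2*y+1) = - eps y := by
  unfold eps
  rw [Nat.digits_def' (by norm_num) (by omega)]
  have h1 : (2*y+1) % 2 = 1 := by omega
  have h2 : (2*y+1) / 2 = y := by omega
  rw [h1, h2]
  by_cases h : Even ((Nat.digits 2 y).sum) <;>
    simp [h, Nat.even_add_one, Nat.even_add, Nat.odd_add] <;> omega

lemma sum_range_two_mul {M : Type*} [AddCommMonoid M] (n : ℕ) (f : ℕ → M) :
    ∑ x ∈ Finset.range (2*n), f x = ∑ y ∈ Finset.range n, (f (2*y) + f (2*y+1)) := by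
  induction n with
  | zero => simp
  | succ n ih =>
    have : 2*(n+1) = (2*n) + 1 + 1 := by ring
    rw [this, Finset.sum_range_succ, Finset.sum_range_succ, Finset.sum_range_succ, ih]
    abel

lemma block_sum {M : Type*} [AddCommMonoid M] (n m : ℕ) (f : ℕ → M) :
    ∑ x ∈ Finset.range (n+m), f x = ∑ x ∈ Finset.range n, f x + ∑ x ∈ Finset.range m, f (n + x) := by
  induction m with
  | zero => simp
  | succ m ih =>
    have h : n + (m+1) = (n+m) + 1 := by ring
    rw [h, Finset.sum_range_succ, Finset.sum_range_succ, ih]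
    abel

noncomputable def Eexp (r m : ℕ) : ℂ :=
  Complex.exp (-(2 * (Real.pi:ℂ) * Complex.I * (r:ℂ)) / 2 ^ m)

lemma epsHat_succ (m r : ℕ) :
    epsHat (m+1) r = ((1 - Eexp r (m+1))/2) * epsHat m r := by
  unfold epsHat Eexp
  have h2m : (2:ℕ)^(m+1) = 2 * 2^m := by ring
  rw [h2m, sum_range_two_mul]
  have h1 : ∀ y : ℕ, Complex.exp (-(2 * (Real.pi:ℂ) * Complex.I * (r:ℂ) * ((2*y : ℕ):ℂ)) / 2 ^ (m+1))
      = Complex.exp (-(2 * (Real.pi:ℂ) * Complex.I * (r:ℂ) * (y:ℂ)) / 2 ^ m) := by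
    intro y
    congr 1
    have h : (2:ℂ)^(m+1) = 2 * 2^m := by ring
    rw [h]
    push_cast
    have : (2:ℂ)^m ≠ 0 := pow_ne_zero m two_ne_zero
    field_simp
  have h2 : ∀ y : ℕ, Complex.exp (-(2 * (Real.pi:ℂ) * Complex.I * (r:ℂ) * ((2*y+1 : ℕ):ℂ)) / 2 ^ (m+1))
      = Complex.exp (-(2 * (Real.pi:ℂ) * Complex.I * (r:ℂ) * (y:ℂ)) / 2 ^ m)
        * Complex.exp (-(2 * (Real.pi:ℂ) * Complex.I * (r:ℂ)) / 2 ^ (m+1)) := by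
    intro y
    rw [← Complex.exp_add]
    congr 1
    have h : (2:ℂ)^(m+1) = 2 * 2^m := by ring
    rw [h]
    push_cast
    have : (2:ℂ)^m ≠ 0 := pow_ne_zero m two_ne_zero
    field_simp
    ring
  have key : ∀ y ∈ Finset.range (2^m),
      (eps (2*y) * Complex.exp (-(2 * (Real.pi:ℂ) * Complex.I * (r:ℂ) * ((2*y : ℕ):ℂ)) / 2 ^ (m+1))
       + eps (2*y+1) * Complex.exp (-(2 * (Real.pi:ℂ) * Complex.I * (r:ℂ) * ((2*y+1 : ℕ):ℂ)) / 2 ^ (m+1)))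
      = (1 - Complex.exp (-(2 * (Real.pi:ℂ) * Complex.I * (r:ℂ)) / 2 ^ (m+1)))
        * (eps y * Complex.exp (-(2 * (Real.pi:ℂ) * Complex.I * (r:ℂ) * (y:ℂ)) / 2 ^ m)) := by
    intro y _
    rw [eps_two_mul, eps_two_mul_add_one, h1 y, h2 y]
    ring
  rw [Finset.sum_congr rfl key, ← Finset.mul_sum]
  have hz : (2:ℂ) ^ (-((m+1 : ℕ) : ℤ)) = (2:ℂ) ^ (-(m:ℤ)) * 2⁻¹ := by
    rw [show (-((m+1 : ℕ) : ℤ)) = -(m:ℤ) + (-1) by push_cast; ring, zpow_add₀ (by norm_num : (2:ℂ) ≠ 0)]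
    norm_num
  rw [hz]
  ring

lemma Eexp_add (r s m : ℕ) : Eexp (r+s) m = Eexp r m * Eexp s m := by
  rw [Eexp, Eexp, Eexp, ← Complex.exp_add]
  congr 1
  push_cast
  ring

lemma Eexp_mul (b c m : ℕ) : Eexp (b*c) m = (Eexp c m)^b := by
  rw [Eexp, Eexp, ← Complex.exp_nat_mul]
  congr 1
  push_cast
  ring

lemma Eexp_pow_of_le {j m : ℕ} (h : j ≤ m) : Eexp (2^m) j = 1 := by
  obtain ⟨d, rfl⟩ := Nat.exists_eq_add_of_le h
  have harg : (-(2 * (Real.pi:ℂ) * Complex.I * ((2^(j+d) : ℕ):ℂ)) / 2 ^ j)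
      = ((-(2^d : ℤ)) : ℂ) * (2 * (Real.pi:ℂ) * Complex.I) := by
    have : (2:ℂ)^j ≠ 0 := pow_ne_zero j two_ne_zero
    push_cast [pow_add]
    field_simp
  rw [Eexp, harg]
  have h2 := Complex.exp_int_mul_two_pi_mul_I (-(2^d : ℤ))
  push_cast at h2 ⊢
  exact h2

lemma Eexp_pow_succ (m : ℕ) : Eexp (2^m) (m+1) = -1 := by
  have harg : (-(2 * (Real.pi:ℂ) * Complex.I * ((2^m : ℕ):ℂ)) / 2 ^ (m+1))
      = -((Real.pi:ℂ) * Complex.I) := by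
    have : (2:ℂ)^m ≠ 0 := pow_ne_zero m two_ne_zero
    push_cast [pow_succ]
    field_simp
  rw [Eexp, harg, Complex.exp_neg, Complex.exp_pi_mul_I]
  norm_num

lemma Eexp_pow_succ_succ (m : ℕ) : Eexp (2^m) (m+2) = -Complex.I := by
  have harg : (-(2 * (Real.pi:ℂ) * Complex.I * ((2^m : ℕ):ℂ)) / 2 ^ (m+2))
      = ((-(Real.pi/2) : ℝ) : ℂ) * Complex.I := by
    have : (2:ℂ)^m ≠ 0 := pow_ne_zero m two_ne_zero
    push_cast [pow_succ]
    field_simp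
  rw [Eexp, harg, Complex.exp_mul_I, ← Complex.ofReal_cos, ← Complex.ofReal_sin]
  simp [Real.cos_pi_div_two, Real.sin_pi_div_two]

lemma Eexp_sq (s m : ℕ) : (Eexp s (m+1+1))^2 = Eexp s (m+1) := by
  rw [Eexp, Eexp, ← Complex.exp_nat_mul]
  congr 1
  have h2 : (2:ℂ)^(m+1) ≠ 0 := pow_ne_zero _ two_ne_zero
  have h3 : (2:ℂ)^(m+1+1) = 2 * 2^(m+1) := by ring
  rw [h3]
  push_cast
  field_simp

lemma epsHat_eq (m r : ℕ) :
    epsHat m r = (2 : ℂ) ^ (-(m : ℤ)) * ∑ x ∈ Finset.range (2^m), eps x * (Eexp r m)^x := by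
  unfold epsHat Eexp
  congr 1
  apply Finset.sum_congr rfl
  intro x _
  congr 1
  rw [← Complex.exp_nat_mul]
  congr 1
  push_cast
  ring

lemma epsHat_period (m s b : ℕ) : epsHat m (s + b * 2^m) = epsHat m s := by
  rw [epsHat_eq, epsHat_eq, Eexp_add, Eexp_mul, Eexp_pow_of_le le_rfl]
  simp

noncomputable def wfac (r j : ℕ) : ℝ := ‖(1 - Eexp r j)/2‖

lemma norm_epsHat_prod {t k : ℕ} (r : ℕ) (h : t ≤ k) :
    ‖epsHat k r‖ = ‖epsHat t r‖ * ∏ j ∈ Finset.Ico t k, wfac r (j+1) := by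
  induction k, h using Nat.le_induction with
  | base => simp
  | succ k hk ih =>
    rw [epsHat_succ, norm_mul, ih, Finset.prod_Ico_succ_top hk]
    unfold wfac
    ring

lemma norm_div_two (w : ℂ) : ‖w/2‖ = ‖w‖/2 := by
  rw [norm_div]
  norm_num

lemma one_step_ineq (z : ℂ) (hz : ‖z‖ = 1) :
    ‖(1-z)/2‖ + ‖(1+z)/2‖ ≤ Real.sqrt 2 := by
  have par := parallelogram_law_with_norm ℝ (1:ℂ) z
  rw [hz] at par
  have hA : (0:ℝ) ≤ ‖(1:ℂ)-z‖ := norm_nonneg _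
  have hB : (0:ℝ) ≤ ‖(1:ℂ)+z‖ := norm_nonneg _
  have hS : Real.sqrt 2 ^ 2 = 2 := Real.sq_sqrt (by norm_num)
  have hS0 : (0:ℝ) ≤ Real.sqrt 2 := Real.sqrt_nonneg 2
  rw [norm_div_two, norm_div_two]
  have h1 : ‖(1:ℂ)‖ = 1 := by simp
  rw [h1] at par
  nlinarith [sq_nonneg (‖(1:ℂ)-z‖ - ‖(1:ℂ)+z‖), sq_nonneg (‖(1:ℂ)-z‖ + ‖(1:ℂ)+z‖ - 2*Real.sqrt 2)]

set_option maxHeartbeats 1000000 in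
lemma key_ineq (z : ℂ) (hz : ‖z‖ = 1) :
    ‖(1-z^2)/2‖*‖(1-z)/2‖ + ‖(1+z^2)/2‖*‖(1+Complex.I*z)/2‖
      + ‖(1-z^2)/2‖*‖(1+z)/2‖ + ‖(1+z^2)/2‖*‖(1-Complex.I*z)/2‖
      ≤ Real.sqrt (2 + Real.sqrt 2) := by
  set u := ‖1-z^2‖ with hu
  set v := ‖1+z^2‖ with hv
  set A := ‖(1:ℂ)-z‖ with hA
  set B := ‖(1:ℂ)+z‖ with hB
  set C := ‖(1:ℂ)+Complex.I*z‖ with hC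
  set D := ‖(1:ℂ)-Complex.I*z‖ with hD
  have hz2 : ‖z^2‖ = 1 := by rw [norm_pow, hz]; norm_num
  have hIz : ‖Complex.I*z‖ = 1 := by rw [norm_mul, Complex.norm_I, hz]; norm_num
  have none : ‖(1:ℂ)‖ = 1 := by simp
  have par1 : u*u + v*v = 4 := by
    have := parallelogram_law_with_norm ℝ (1:ℂ) (z^2)
    rw [hz2, none] at this
    rw [hu, hv]
    nlinarith [this]
  have parAB : A*A + B*B = 4 := by
    have := parallelogram_law_with_norm ℝ (1:ℂ) z
    rw [hz, none] at this
    nlinarith [this]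
  have parCD : C*C + D*D = 4 := by
    have := parallelogram_law_with_norm ℝ (1:ℂ) (Complex.I*z)
    rw [hIz, none] at this
    nlinarith [this]
  have pAB : A*B = u := by
    rw [hA, hB, hu, ← norm_mul]
    congr 1
    ring
  have pCD : C*D = v := by
    rw [hC, hD, hv, ← norm_mul]
    have : ((1:ℂ)+Complex.I*z) * (1-Complex.I*z) = 1 - Complex.I^2 * z^2 := by ring
    rw [this, Complex.I_sq]
    congr 1
    ring
  have hu0 : 0 ≤ u := norm_nonneg _
  have hv0 : 0 ≤ v := norm_nonneg _
  have hA0 : 0 ≤ A := norm_nonneg _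
  have hB0 : 0 ≤ B := norm_nonneg _
  have hC0 : 0 ≤ C := norm_nonneg _
  have hD0 : 0 ≤ D := norm_nonneg _
  have hS : Real.sqrt 2 ^ 2 = 2 := Real.sq_sqrt (by norm_num)
  have hS0 : (0:ℝ) ≤ Real.sqrt 2 := Real.sqrt_nonneg 2
  have hR : Real.sqrt (2 + Real.sqrt 2) ^ 2 = 2 + Real.sqrt 2 :=
    Real.sq_sqrt (by positivity)
  have hR0 : (0:ℝ) ≤ Real.sqrt (2 + Real.sqrt 2) := Real.sqrt_nonneg _
  rw [norm_div_two, norm_div_two, norm_div_two, norm_div_two, norm_div_two, norm_div_two]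
  rw [← hu, ← hv, ← hA, ← hB, ← hC, ← hD]
  clear_value u v A B C D
  clear hu hv hA hB hC hD hz hz2 hIz none
  -- X := u*(A+B) + v*(C+D); show X ≤ 4*R
  have huv : u + v ≤ 2 * Real.sqrt 2 := by nlinarith [sq_nonneg (u - v)]
  have cauchy : (u*(A+B) + v*(C+D))^2 ≤ (u*u+v*v) * ((A+B)^2 + (C+D)^2) := by
    nlinarith [sq_nonneg (u*(C+D) - v*(A+B))]
  have hAB2 : (A+B)^2 = 4 + 2*u := by nlinarith [parAB, pAB]
  have hCD2 : (C+D)^2 = 4 + 2*v := by nlinarith [parCD, pCD]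
  have step1 : (u*(A+B) + v*(C+D))^2 ≤ 4*(8 + 2*(u+v)) := by
    rw [hAB2, hCD2] at cauchy
    nlinarith [cauchy, par1]
  have hX2 : (u*(A+B) + v*(C+D))^2 ≤ (4*Real.sqrt (2 + Real.sqrt 2))^2 := by
    have hr2 : (4*Real.sqrt (2 + Real.sqrt 2))^2 = 32 + 16*Real.sqrt 2 := by
      nlinarith [hR]
    rw [hr2]
    nlinarith [step1, huv]
  have hX : u*(A+B) + v*(C+D) ≤ 4*Real.sqrt (2 + Real.sqrt 2) := by
    have h40 : (0:ℝ) ≤ 4*Real.sqrt (2 + Real.sqrt 2) := by positivity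
    exact le_of_pow_le_pow_left₀ two_ne_zero h40 hX2
  nlinarith [hX]

lemma Eexp_norm (s m : ℕ) : ‖Eexp s m‖ = 1 := by
  rw [Eexp]
  have harg : (-(2 * (Real.pi:ℂ) * Complex.I * (s:ℂ)) / 2 ^ m)
      = ((-(2*Real.pi*s)/2^m : ℝ) : ℂ) * Complex.I := by
    push_cast
    ring
  rw [harg]
  exact Complex.norm_exp_ofReal_mul_I _

lemma wfac_periodic {j m : ℕ} (h : j ≤ m) (s b : ℕ) :
    wfac (s + b * 2^m) j = wfac s j := by
  unfold wfac
  rw [Eexp_add, Eexp_mul, Eexp_pow_of_le h]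
  simp

lemma wfac_nonneg (r j : ℕ) : 0 ≤ wfac r j := norm_nonneg _

lemma wfac_top0 (s b m : ℕ) :
    wfac (s + b * 2^m) (m+1) = ‖(1 - Eexp s (m+1) * (-1:ℂ)^b)/2‖ := by
  unfold wfac
  rw [Eexp_add, Eexp_mul, Eexp_pow_succ]

lemma wfac_top1 (s b m : ℕ) :
    wfac (s + b * 2^m) (m+1) = ‖(1 - (Eexp s (m+2))^2 * (-1:ℂ)^b)/2‖ := by
  rw [wfac_top0]
  congr 2
  rw [Eexp_sq]

lemma wfac_top2 (s b m : ℕ) :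
    wfac (s + b * 2^m) (m+2) = ‖(1 - Eexp s (m+2) * (-Complex.I)^b)/2‖ := by
  unfold wfac
  rw [Eexp_add, Eexp_mul, Eexp_pow_succ_succ]

noncomputable def Tsum (t a n : ℕ) : ℝ :=
  ∑ r ∈ (Finset.range (2^(t+n))).filter (fun r => r % 2^t = a),
    ∏ j ∈ Finset.Ico t (t+n), wfac r (j+1)

lemma Tsum_nonneg (t a n : ℕ) : 0 ≤ Tsum t a n :=
  Finset.sum_nonneg fun r _ => Finset.prod_nonneg fun j _ => wfac_nonneg r (j+1)

lemma Tsum_zero (t a : ℕ) (ha : a < 2^t) : Tsum t a 0 = 1 := by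
  unfold Tsum
  have hfil : (Finset.range (2^(t+0))).filter (fun r => r % 2^t = a) = {a} := by
    ext r
    simp only [Finset.mem_filter, Finset.mem_range, Finset.mem_singleton]
    constructor
    · rintro ⟨hr, he⟩
      rw [Nat.mod_eq_of_lt (by simpa using hr)] at he
      exact he
    · rintro rfl
      exact ⟨by simpa using ha, Nat.mod_eq_of_lt ha⟩
  rw [hfil]
  simp

lemma cond_per (t n s b : ℕ) : (s + b * 2^(t+n)) % 2^t = s % 2^t := by
  have h : b * 2^(t+n) = 2^t * (b * 2^n) := by rw [pow_add]; ring
  rw [h, Nat.add_mul_mod_self_left]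

lemma Tstep1 (t a n : ℕ) : Tsum t a (n+1) ≤ Real.sqrt 2 * Tsum t a n := by
  unfold Tsum
  rw [Finset.sum_filter, Finset.sum_filter]
  have hsplit : (2:ℕ)^(t+(n+1)) = 2^(t+n) + 2^(t+n) := by
    rw [show t+(n+1) = (t+n)+1 from rfl, pow_succ]
    ring
  rw [hsplit, block_sum, Finset.mul_sum, ← Finset.sum_add_distrib]
  apply Finset.sum_le_sum
  intro s _
  have e0 : 2^(t+n) + s = s + 1 * 2^(t+n) := by ring
  rw [e0, cond_per]
  by_cases h : s % 2^t = a
  · rw [if_pos h, if_pos h, if_pos h]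
    have hts : t ≤ t + n := Nat.le_add_right t n
    have hrw : t + (n + 1) = (t + n) + 1 := by omega
    rw [hrw, Finset.prod_Ico_succ_top hts, Finset.prod_Ico_succ_top hts]
    have hlow : ∏ j ∈ Finset.Ico t (t+n), wfac (s + 1 * 2^(t+n)) (j+1)
        = ∏ j ∈ Finset.Ico t (t+n), wfac s (j+1) := by
      apply Finset.prod_congr rfl
      intro j hj
      have hj' : j + 1 ≤ t + n := by
        have := (Finset.mem_Ico.mp hj).2
        omega
      exact wfac_periodic hj' s 1
    rw [hlow, wfac_top0]
    set z := Eexp s (t+n+1) with hzdef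
    have hz : ‖z‖ = 1 := Eexp_norm s (t+n+1)
    have e1 : (1:ℂ) - z * (-1:ℂ)^1 = 1 + z := by ring
    rw [e1]
    have hkey := one_step_ineq z hz
    have hP : 0 ≤ ∏ j ∈ Finset.Ico t (t+n), wfac s (j+1) :=
      Finset.prod_nonneg fun j _ => wfac_nonneg s (j+1)
    have hw : wfac s (t+n+1) = ‖(1-z)/2‖ := rfl
    rw [hw]
    nlinarith [hkey, hP, norm_nonneg ((1-z)/2), norm_nonneg ((1+z)/2)]
  · rw [if_neg h, if_neg h, if_neg h]
    simp

lemma neg_I_sq : (-Complex.I)^2 = -1 := by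
  rw [neg_sq, Complex.I_sq]

lemma neg_I_cube : (-Complex.I)^3 = Complex.I := by
  rw [pow_succ, neg_I_sq]
  ring

set_option maxHeartbeats 1000000 in
lemma Tstep2 (t a n : ℕ) :
    Tsum t a (n+2) ≤ Real.sqrt (2 + Real.sqrt 2) * Tsum t a n := by
  unfold Tsum
  rw [Finset.sum_filter, Finset.sum_filter]
  have hsplit : (2:ℕ)^(t+(n+2)) = 2^(t+n) + 2^(t+n) + 2^(t+n) + 2^(t+n) := by
    rw [show t+(n+2) = ((t+n)+1)+1 from by omega, pow_succ, pow_succ]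
    ring
  rw [hsplit, block_sum, block_sum, block_sum, Finset.mul_sum,
    ← Finset.sum_add_distrib, ← Finset.sum_add_distrib, ← Finset.sum_add_distrib]
  apply Finset.sum_le_sum
  intro s _
  have e1 : 2^(t+n) + s = s + 1 * 2^(t+n) := by ring
  have e2 : 2^(t+n) + 2^(t+n) + s = s + 2 * 2^(t+n) := by ring
  have e3 : 2^(t+n) + 2^(t+n) + 2^(t+n) + s = s + 3 * 2^(t+n) := by ring
  rw [e1, e2, e3, cond_per, cond_per, cond_per]
  by_cases h : s % 2^t = a
  · rw [if_pos h, if_pos h, if_pos h, if_pos h, if_pos h]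
    have hts : t ≤ t + n := Nat.le_add_right t n
    have hts1 : t ≤ (t + n) + 1 := by omega
    have hrw : t + (n + 2) = ((t + n) + 1) + 1 := by omega
    rw [hrw]
    rw [Finset.prod_Ico_succ_top hts1, Finset.prod_Ico_succ_top hts,
        Finset.prod_Ico_succ_top hts1, Finset.prod_Ico_succ_top hts,
        Finset.prod_Ico_succ_top hts1, Finset.prod_Ico_succ_top hts,
        Finset.prod_Ico_succ_top hts1, Finset.prod_Ico_succ_top hts]
    have hlow : ∀ b : ℕ, ∏ j ∈ Finset.Ico t (t+n), wfac (s + b * 2^(t+n)) (j+1)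
        = ∏ j ∈ Finset.Ico t (t+n), wfac s (j+1) := by
      intro b
      apply Finset.prod_congr rfl
      intro j hj
      have hj' : j + 1 ≤ t + n := by
        have := (Finset.mem_Ico.mp hj).2
        omega
      exact wfac_periodic hj' s b
    rw [hlow 1, hlow 2, hlow 3]
    set z := Eexp s ((t+n)+2) with hzdef
    have hz : ‖z‖ = 1 := Eexp_norm s ((t+n)+2)
    have w01 : wfac s ((t+n)+1) = ‖(1 - z^2)/2‖ := by
      unfold wfac
      rw [hzdef, Eexp_sq]
    have w02 : wfac s ((t+n)+1+1) = ‖(1 - z)/2‖ := rfl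
    rw [w01, w02, wfac_top1, wfac_top1, wfac_top1, wfac_top2, wfac_top2, wfac_top2]
    rw [← hzdef]
    have q11 : (1:ℂ) - z^2 * (-1:ℂ)^1 = 1 + z^2 := by ring
    have q12 : (1:ℂ) - z * (-Complex.I)^1 = 1 + Complex.I * z := by ring
    have q21 : (1:ℂ) - z^2 * (-1:ℂ)^2 = 1 - z^2 := by ring
    have q22 : (1:ℂ) - z * (-Complex.I)^2 = 1 + z := by rw [neg_I_sq]; ring
    have q31 : (1:ℂ) - z^2 * (-1:ℂ)^3 = 1 + z^2 := by ring
    have q32 : (1:ℂ) - z * (-Complex.I)^3 = 1 - Complex.I * z := by rw [neg_I_cube]; ring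
    rw [q11, q12, q21, q22, q31, q32]
    have hkey := key_ineq z hz
    have hP : 0 ≤ ∏ j ∈ Finset.Ico t (t+n), wfac s (j+1) :=
      Finset.prod_nonneg fun j _ => wfac_nonneg s (j+1)
    nlinarith [mul_le_mul_of_nonneg_left hkey hP]
  · rw [if_neg h, if_neg h, if_neg h, if_neg h, if_neg h]
    simp

lemma Tsum_le (t a : ℕ) (ha : a < 2^t) (n : ℕ) :
    Tsum t a n ≤ Real.sqrt 2 * (Real.sqrt (Real.sqrt (2 + Real.sqrt 2)))^n := by
  have hy0 : (0:ℝ) < Real.sqrt (2 + Real.sqrt 2) := Real.sqrt_pos.mpr (by positivity)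
  have hy1 : (1:ℝ) ≤ Real.sqrt (2 + Real.sqrt 2) := by
    rw [show (1:ℝ) = Real.sqrt 1 from (Real.sqrt_one).symm]
    exact Real.sqrt_le_sqrt (by nlinarith [Real.sqrt_nonneg 2])
  have hb1 : (1:ℝ) ≤ Real.sqrt (Real.sqrt (2 + Real.sqrt 2)) := by
    rw [show (1:ℝ) = Real.sqrt 1 from (Real.sqrt_one).symm]
    exact Real.sqrt_le_sqrt hy1
  have hb0 : (0:ℝ) ≤ Real.sqrt (Real.sqrt (2 + Real.sqrt 2)) := by positivity
  have hbsq : (Real.sqrt (Real.sqrt (2 + Real.sqrt 2)))^2 = Real.sqrt (2 + Real.sqrt 2) :=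
    Real.sq_sqrt (le_of_lt hy0)
  have h20 : (0:ℝ) ≤ Real.sqrt 2 := Real.sqrt_nonneg 2
  have h21 : (1:ℝ) ≤ Real.sqrt 2 := by
    rw [show (1:ℝ) = Real.sqrt 1 from (Real.sqrt_one).symm]
    exact Real.sqrt_le_sqrt (by norm_num)
  induction n using Nat.twoStepInduction with
  | zero =>
    rw [Tsum_zero t a ha]
    simpa using h21
  | one =>
    have h := Tstep1 t a 0
    rw [Tsum_zero t a ha] at h
    calc Tsum t a 1 ≤ Real.sqrt 2 * 1 := h
    _ ≤ Real.sqrt 2 * (Real.sqrt (Real.sqrt (2 + Real.sqrt 2)))^1 := by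
        apply mul_le_mul_of_nonneg_left _ h20
        simpa using hb1
  | more n ih _ =>
    have h := Tstep2 t a n
    calc Tsum t a (n+2) ≤ Real.sqrt (2 + Real.sqrt 2) * Tsum t a n := h
    _ ≤ Real.sqrt (2 + Real.sqrt 2) * (Real.sqrt 2 * (Real.sqrt (Real.sqrt (2 + Real.sqrt 2)))^n) :=
        mul_le_mul_of_nonneg_left ih (le_of_lt hy0)
    _ = Real.sqrt 2 * (Real.sqrt (Real.sqrt (2 + Real.sqrt 2)))^(n+2) := by
        have hp : (Real.sqrt (Real.sqrt (2 + Real.sqrt 2)))^(n+2)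
            = (Real.sqrt (Real.sqrt (2 + Real.sqrt 2)))^n * Real.sqrt (2 + Real.sqrt 2) := by
          rw [pow_add, hbsq]
        rw [hp]
        ring

lemma epsHat_mod (t r : ℕ) : epsHat t r = epsHat t (r % 2^t) := by
  conv_lhs => rw [← Nat.mod_add_div' r (2^t), epsHat_period]

theorem epsHat_residue_class_sum_bound :
    ∃ C > (0 : ℝ), ∀ k t a : ℕ, 1 ≤ k → t ≤ k → a ≤ 2 ^ t - 1 →
      ∑ r ∈ (Finset.range (2 ^ k)).filter (fun r => r % 2 ^ t = a),
          ‖epsHat k r‖ ≤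
        C * (2 : ℝ) ^ ((1 / 2 - (1 / 2 - Real.logb 2 (Real.sqrt (2 + Real.sqrt 2)) / 2)) *
              ((k : ℝ) - (t : ℝ))) * ‖epsHat t a‖ * k := by
  refine ⟨Real.sqrt 2, Real.sqrt_pos.mpr (by norm_num), ?_⟩
  intro k t a hk htk ha
  have ha' : a < 2^t := by
    have h1 : (1:ℕ) ≤ 2^t := Nat.one_le_two_pow
    omega
  have hy0 : (0:ℝ) < Real.sqrt (2 + Real.sqrt 2) := Real.sqrt_pos.mpr (by positivity)
  set β : ℝ := Real.sqrt (Real.sqrt (2 + Real.sqrt 2)) with hβ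
  -- Step 1: rewrite LHS
  have hLHS : ∑ r ∈ (Finset.range (2 ^ k)).filter (fun r => r % 2 ^ t = a), ‖epsHat k r‖
      = ‖epsHat t a‖ * Tsum t a (k - t) := by
    rw [Tsum, Finset.mul_sum]
    have hkt : t + (k - t) = k := by omega
    rw [hkt]
    apply Finset.sum_congr rfl
    intro r hr
    have hmod : r % 2^t = a := (Finset.mem_filter.mp hr).2
    rw [norm_epsHat_prod r htk, epsHat_mod t r, hmod]
  rw [hLHS]
  -- Step 2: rewrite the rpow as β ^ (k - t)
  have hE : (2 : ℝ) ^ ((1 / 2 - (1 / 2 - Real.logb 2 (Real.sqrt (2 + Real.sqrt 2)) / 2)) *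
              ((k : ℝ) - (t : ℝ))) = β ^ (k - t) := by
    have he : (1 / 2 - (1 / 2 - Real.logb 2 (Real.sqrt (2 + Real.sqrt 2)) / 2)) *
        ((k : ℝ) - (t : ℝ))
        = Real.logb 2 (Real.sqrt (2 + Real.sqrt 2)) * ((1/2 : ℝ) * ((k - t : ℕ) : ℝ)) := by
      rw [Nat.cast_sub htk]
      ring
    rw [he, Real.rpow_mul (by norm_num : (0:ℝ) ≤ 2),
      Real.rpow_logb (by norm_num) (by norm_num) hy0,
      Real.rpow_mul (le_of_lt hy0), ← Real.sqrt_eq_rpow, Real.rpow_natCast]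
  rw [hE]
  -- Step 3: conclude
  have hT := Tsum_le t a ha' (k - t)
  have hnorm : (0:ℝ) ≤ ‖epsHat t a‖ := norm_nonneg _
  have hk1 : (1:ℝ) ≤ (k:ℝ) := by exact_mod_cast hk
  have hβn : (0:ℝ) ≤ β ^ (k - t) := by positivity
  have h20 : (0:ℝ) ≤ Real.sqrt 2 := Real.sqrt_nonneg 2
  calc ‖epsHat t a‖ * Tsum t a (k - t)
      ≤ ‖epsHat t a‖ * (Real.sqrt 2 * β ^ (k - t)) := mul_le_mul_of_nonneg_left hT hnorm
    _ = Real.sqrt 2 * β ^ (k - t) * ‖epsHat t a‖ * 1 := by ring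
    _ ≤ Real.sqrt 2 * β ^ (k - t) * ‖epsHat t a‖ * k := by
        apply mul_le_mul_of_nonneg_left hk1
        positivity
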